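/- Let K be a field and V, W finite-dimensional vector spaces over K, with subspaces V₀ ≤ V and W₀ ≤ W. Then, under the canonical isomorphism dualDistrib : V* ⊗ W* ≅ (V ⊗ W)*, the image of the subspace V₀^⊥ ⊗ W₀^⊥ (i.e. the image of the map V₀^⊥ ⊗ W₀^⊥ → V* ⊗ W* induced by the inclusions, composed with dualDistrib) equals the dual annihilator (V₀ ⊗ W + V ⊗ W₀)^⊥ ⊆ (V ⊗ W)*, where V₀ ⊗ W and V ⊗ W₀ denote the images of the canonical maps into V ⊗ W. -/

import Mathlib

set_option maxHeartbeats 1000000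
set_option synthInstance.maxHeartbeats 1000000


open TensorProduct

open Module LinearMap in
private lemma tp_map_injective {K V V' W W' : Type*} [Field K]
    [AddCommGroup V] [Module K V] [AddCommGroup V'] [Module K V']
    [AddCommGroup W] [Module K W] [AddCommGroup W'] [Module K W']
    {f : V →ₗ[K] V'} {g : W →ₗ[K] W'} (hf : Function.Injective f)
    (hg : Function.Injective g) : Function.Injective (TensorProduct.map f g) := by
  rw [← LinearMap.lTensor_comp_rTensor]
  exact (Module.Flat.lTensor_preserves_injective_linearMap g hg).comp
    (Module.Flat.rTensor_preserves_injective_linearMap f hf)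

/-- for finite-dimensional `V`, `W` with subspaces `V₀`, `W₀`, under
`dualDistrib` the image of `V₀^⊥ ⊗ W₀^⊥` equals `(V₀ ⊗ W + V ⊗ W₀)^⊥`. -/
theorem annihilator_tensor_annihilator {K V W : Type*} [Field K]
    [AddCommGroup V] [Module K V] [FiniteDimensional K V]
    [AddCommGroup W] [Module K W] [FiniteDimensional K W]
    (V₀ : Submodule K V) (W₀ : Submodule K W) :
    LinearMap.range (TensorProduct.dualDistrib K V W ∘ₗ
        TensorProduct.map V₀.dualAnnihilator.subtype W₀.dualAnnihilator.subtype)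
      = Submodule.dualAnnihilator
          (LinearMap.range (TensorProduct.map V₀.subtype (LinearMap.id : W →ₗ[K] W))
            ⊔ LinearMap.range
                (TensorProduct.map (LinearMap.id : V →ₗ[K] V) W₀.subtype)) := by
  classical
  set S := LinearMap.range (TensorProduct.map V₀.subtype (LinearMap.id : W →ₗ[K] W))
      ⊔ LinearMap.range (TensorProduct.map (LinearMap.id : V →ₗ[K] V) W₀.subtype) with hS
  -- easy inclusion
  have hle : LinearMap.range (TensorProduct.dualDistrib K V W ∘ₗ
        TensorProduct.map V₀.dualAnnihilator.subtype W₀.dualAnnihilator.subtype)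
      ≤ S.dualAnnihilator := by
    rintro _ ⟨t, rfl⟩
    rw [Submodule.mem_dualAnnihilator]
    intro y hy
    induction t with
    | zero => simp
    | add a b ha hb =>
      simp only [LinearMap.coe_comp, Function.comp_apply] at ha hb
      simp only [map_add, LinearMap.add_apply, LinearMap.coe_comp, Function.comp_apply]
      rw [ha, hb, add_zero]
    | tmul lam mu =>
      rcases Submodule.mem_sup.mp hy with ⟨a, ⟨a', rfl⟩, b, ⟨b', rfl⟩, rfl⟩
      have h1 : (TensorProduct.dualDistrib K V W
          (TensorProduct.map V₀.dualAnnihilator.subtype W₀.dualAnnihilator.subtype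
            (lam ⊗ₜ mu))) ∘ₗ TensorProduct.map V₀.subtype (LinearMap.id : W →ₗ[K] W)
          = 0 := by
        apply TensorProduct.ext'
        intro v w
        have := (Submodule.mem_dualAnnihilator _).mp lam.2 v v.2
        simp [TensorProduct.dualDistrib_apply, this]
      have h2 : (TensorProduct.dualDistrib K V W
          (TensorProduct.map V₀.dualAnnihilator.subtype W₀.dualAnnihilator.subtype
            (lam ⊗ₜ mu))) ∘ₗ TensorProduct.map (LinearMap.id : V →ₗ[K] V) W₀.subtype
          = 0 := by
        apply TensorProduct.ext'
        intro v w
        have := (Submodule.mem_dualAnnihilator _).mp mu.2 w w.2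
        simp [TensorProduct.dualDistrib_apply, this]
      have e1 := LinearMap.congr_fun h1 a'
      have e2 := LinearMap.congr_fun h2 b'
      simp only [LinearMap.coe_comp, Function.comp_apply, LinearMap.zero_apply] at e1 e2
      simp only [LinearMap.coe_comp, Function.comp_apply, map_add]
      rw [e1, e2, add_zero]
  refine Submodule.eq_of_le_of_finrank_le hle (le_of_eq ?_)
  -- finrank of LHS
  have hinj : Function.Injective (TensorProduct.dualDistrib K V W ∘ₗ
      TensorProduct.map V₀.dualAnnihilator.subtype W₀.dualAnnihilator.subtype) := by
    have h1 : Function.Injective (TensorProduct.dualDistrib K V W) :=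
      (TensorProduct.dualDistribEquivOfBasis (Module.finBasis K V)
        (Module.finBasis K W)).injective
    have := Module.Free.of_divisionRing K ↥W₀.dualAnnihilator
    exact h1.comp (TensorProduct.map_injective_of_flat_flat _ _ V₀.dualAnnihilator.injective_subtype
      W₀.dualAnnihilator.injective_subtype)
  letI : AddCommGroup (↥V₀.dualAnnihilator ⊗[K] ↥W₀.dualAnnihilator) := by
    with_unfolding_all exact
      @TensorProduct.addCommGroup K _ ↥V₀.dualAnnihilator ↥W₀.dualAnnihilator _ _ _ _
  haveI : Module.Free K ↥V₀.dualAnnihilator := by with_unfolding_all exact Module.Free.of_divisionRing K ↥V₀.dualAnnihilator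
  haveI : Module.Free K ↥W₀.dualAnnihilator := by with_unfolding_all exact Module.Free.of_divisionRing K ↥W₀.dualAnnihilator
  haveI : Module.Free K (V ⧸ V₀) := by with_unfolding_all exact Module.Free.of_divisionRing K (V ⧸ V₀)
  haveI : Module.Free K (W ⧸ W₀) := by with_unfolding_all exact Module.Free.of_divisionRing K (W ⧸ W₀)
  have ht : Module.finrank K (↥V₀.dualAnnihilator ⊗[K] ↥W₀.dualAnnihilator)
      = Module.finrank K ↥V₀.dualAnnihilator * Module.finrank K ↥W₀.dualAnnihilator := by
    with_unfolding_all exact Module.finrank_tensorProduct (R := K) (S := K) (M := ↥V₀.dualAnnihilator) (M' := ↥W₀.dualAnnihilator)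
  rw [LinearMap.finrank_range_of_inj hinj, ht]
  -- finrank of RHS
  have hq : Module.finrank K S.dualAnnihilator = Module.finrank K ((V ⊗[K] W) ⧸ S) := by
    with_unfolding_all exact (LinearEquiv.finrank_eq (Subspace.quotEquivAnnihilator S)).symm
  have hqt : Module.finrank K ((V ⊗[K] W) ⧸ S)
      = Module.finrank K ((V ⧸ V₀) ⊗[K] (W ⧸ W₀)) := by
    with_unfolding_all exact (LinearEquiv.finrank_eq (TensorProduct.quotientTensorQuotientEquiv (R := K) V₀ W₀)).symm
  have hqq : Module.finrank K ((V ⧸ V₀) ⊗[K] (W ⧸ W₀))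
      = Module.finrank K (V ⧸ V₀) * Module.finrank K (W ⧸ W₀) := by
    with_unfolding_all exact Module.finrank_tensorProduct (R := K) (S := K) (M := V ⧸ V₀) (M' := W ⧸ W₀)
  have h1 : Module.finrank K (V ⧸ V₀) = Module.finrank K V₀.dualAnnihilator := by
    with_unfolding_all exact LinearEquiv.finrank_eq (Subspace.quotEquivAnnihilator V₀)
  have h2 : Module.finrank K (W ⧸ W₀) = Module.finrank K W₀.dualAnnihilator := by
    with_unfolding_all exact LinearEquiv.finrank_eq (Subspace.quotEquivAnnihilator W₀)
  rw [hq, hqt, hqq, h1, h2]
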